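/- Suppose for a system with solutions x(·; t0, ξ, φ) the following continuity property holds: whenever ξᵏ → ξ⁰ in ℝⁿ and φᵏ ⇀ φ⁰ weak-* in L^∞, and the limit solution x(·;t0,ξ⁰,φ⁰) is defined and bounded on [t0,T′] for some T′ > T, then x(·;t0,ξᵏ,φᵏ) converges to x(·;t0,ξ⁰,φ⁰) uniformly on [t0,T′]. If moreover every solution with ξ ∈ B_R^n and φ ∈ B_R^{L^∞} is defined beyond time T, then sup{ |x(t;t0,ξ,φ)| : t ∈ [t0,T], |ξ| ≤ R, ‖φ‖ ≤ R } < ∞. -/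

import Mathlib

set_option maxHeartbeats 1000000


open MeasureTheory Set Filter
open scoped ENNReal RealInnerProductSpace

section Aux

variable {n : ℕ} {μ : MeasureTheory.Measure ℝ} [IsFiniteMeasure μ]

/-- clamp bound -/
lemma clamp_abs_le (m : ℝ) (hm : 0 ≤ m) (a : ℝ) : |max (min a m) (-m)| ≤ |a| := by
  rcases le_total 0 a with h | h
  · have h1 : -m ≤ min a m := le_trans (neg_nonpos.mpr hm) (le_min h hm)
    rw [max_eq_left h1, abs_of_nonneg (le_min h hm), abs_of_nonneg h]
    exact min_le_left _ _
  · have h1 : min a m = a := min_eq_left (h.trans hm)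
    rw [h1, abs_of_nonpos (max_le h (neg_nonpos.mpr hm)), abs_of_nonpos h]
    exact neg_le_neg (le_max_left _ _)

lemma clamp_eventually_eq (a : ℝ) :
    Tendsto (fun m : ℕ => max (min a (m : ℝ)) (-(m : ℝ))) atTop (nhds a) := by
  have h : (fun m : ℕ => max (min a (m : ℝ)) (-(m : ℝ))) =ᶠ[atTop] fun _ => a := by
    rw [Filter.EventuallyEq, Filter.eventually_atTop]
    refine ⟨⌈|a|⌉₊, fun m hm => ?_⟩
    have hma : |a| ≤ (m : ℝ) := le_trans (Nat.le_ceil _) (Nat.cast_le.mpr hm)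
    rw [min_eq_left (le_trans (le_abs_self a) hma),
      max_eq_left (le_trans (neg_le_neg hma) (neg_abs_le a))]
  exact tendsto_const_nhds.congr' h.symm

end Aux

section Compact

variable (n : ℕ) (μ : MeasureTheory.Measure ℝ) [IsFiniteMeasure μ]

local notation "E" => EuclideanSpace ℝ (Fin n)

lemma seq_weak_compact (R : ℝ) (hR : 0 ≤ R)
    (φ : ℕ → ℝ → Fin n → ℝ)
    (hmeas : ∀ k, AEStronglyMeasurable (φ k) μ)
    (hbd : ∀ k, eLpNorm (φ k) ⊤ μ ≤ ENNReal.ofReal R) :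
    ∃ (σ : ℕ → ℕ) (φ0 : ℝ → Fin n → ℝ), StrictMono σ ∧
      AEStronglyMeasurable φ0 μ ∧ eLpNorm φ0 ⊤ μ ≤ ENNReal.ofReal R ∧
      ∀ g : ℝ → Fin n → ℝ, Integrable g μ →
        Tendsto (fun k => ∫ s, ∑ j, g s j * φ (σ k) s j ∂μ) atTop
          (nhds (∫ s, ∑ j, g s j * φ0 s j ∂μ)) := by
  classical
  haveI : Fact ((1:ℝ≥0∞) ≤ 2) := ⟨one_le_two⟩
  -- a.e. coordinatewise bound
  have hae : ∀ k, ∀ᵐ s ∂μ, ∀ j, |φ k s j| ≤ R := by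
    intro k
    filter_upwards [ae_le_eLpNormEssSup (f := φ k) (μ := μ)] with s hs j
    have h2 : (‖φ k s‖₊ : ℝ≥0∞) ≤ ENNReal.ofReal R := by
      refine le_trans hs ?_
      simpa [eLpNorm_exponent_top] using hbd k
    have h3 : ‖φ k s‖ ≤ R := by
      rw [← ENNReal.ofReal_le_ofReal_iff hR, ofReal_norm]
      exact h2
    calc |φ k s j| = ‖φ k s j‖ := (Real.norm_eq_abs _).symm
    _ ≤ ‖φ k s‖ := norm_le_pi_norm _ j
    _ ≤ R := h3
  -- Euclidean-valued versions
  set eqv := PiLp.continuousLinearEquiv 2 ℝ (fun _ : Fin n => ℝ) with heqv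
  set φE : ℕ → ℝ → E := fun k s => eqv.symm (φ k s) with hφE
  have hmeasE : ∀ k, AEStronglyMeasurable (φE k) μ := fun k =>
    eqv.symm.continuous.comp_aestronglyMeasurable (hmeas k)
  have hnormE : ∀ (v : Fin n → ℝ), (∀ j, |v j| ≤ R) →
      ‖(eqv.symm v : E)‖ ≤ Real.sqrt n * R := by
    intro v hv
    rw [EuclideanSpace.norm_eq]
    have h1 : ∑ j, ‖(eqv.symm v : E) j‖ ^ 2 ≤ (n : ℝ) * R ^ 2 := by
      calc ∑ j, ‖(eqv.symm v : E) j‖ ^ 2 ≤ ∑ _j : Fin n, R ^ 2 := by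
            refine Finset.sum_le_sum fun j _ => ?_
            have : ‖(eqv.symm v : E) j‖ = |v j| := by
              simp [heqv, Real.norm_eq_abs]
            rw [this, sq_abs, ← sq_abs]
            exact pow_le_pow_left₀ (abs_nonneg _) (hv j) 2
        _ = (n : ℝ) * R ^ 2 := by simp [mul_comm]
    calc Real.sqrt (∑ j, ‖(eqv.symm v : E) j‖ ^ 2) ≤ Real.sqrt ((n : ℝ) * R ^ 2) :=
          Real.sqrt_le_sqrt h1
      _ = Real.sqrt n * R := by
          rw [Real.sqrt_mul (Nat.cast_nonneg n), Real.sqrt_sq hR]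
  have hboundE : ∀ k, ∀ᵐ s ∂μ, ‖φE k s‖ ≤ Real.sqrt n * R := by
    intro k
    filter_upwards [hae k] with s hs
    exact hnormE _ hs
  have hmem : ∀ k, MemLp (φE k) 2 μ := fun k =>
    (memLp_top_of_bound (hmeasE k) _ (hboundE k)).mono_exponent le_top
  set x : ℕ → Lp E 2 μ := fun k => (hmem k).toLp _ with hx
  -- uniform norm bound
  set B : ℝ≥0∞ := μ Set.univ ^ (2:ℝ≥0∞).toReal⁻¹ * ENNReal.ofReal (Real.sqrt n * R) with hB
  have hBne : B ≠ ⊤ := by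
    refine ENNReal.mul_ne_top ?_ ENNReal.ofReal_ne_top
    exact ENNReal.rpow_ne_top_of_nonneg (by norm_num) (measure_ne_top μ _)
  set M : ℝ := B.toReal with hM
  have hMx : ∀ k, ‖x k‖ ≤ M := by
    intro k
    rw [hx]
    rw [Lp.norm_toLp]
    exact ENNReal.toReal_mono hBne (eLpNorm_le_of_ae_bound (hboundE k))
  have hM0 : 0 ≤ M := ENNReal.toReal_nonneg
  -- countable dense family
  haveI hfact : Fact ((2:ℝ≥0∞) ≠ ⊤) := ⟨by norm_num⟩
  haveI hsc : SecondCountableTopology (Lp E 2 μ) :=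
    MeasureTheory.Lp.SecondCountableTopology
  haveI : TopologicalSpace.SeparableSpace (Lp E 2 μ) :=
    TopologicalSpace.SecondCountableTopology.to_separableSpace
  obtain ⟨D, hDc, hDd⟩ := TopologicalSpace.exists_countable_dense (Lp E 2 μ)
  have hDne : D.Nonempty := hDd.nonempty
  obtain ⟨e, he⟩ := hDc.exists_eq_range hDne
  have hed : DenseRange e := by rw [DenseRange, ← he]; exact hDd
  -- subsequence along which all pairings with `e m` converge
  have hmemK : ∀ k, (fun m => ⟪e m, x k⟫) ∈ Set.pi Set.univ
      (fun m => Icc (-(‖e m‖ * M)) (‖e m‖ * M)) := by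
    intro k
    rw [Set.mem_univ_pi]
    intro m
    rw [Set.mem_Icc, ← abs_le]
    calc |⟪e m, x k⟫| ≤ ‖e m‖ * ‖x k‖ := abs_real_inner_le_norm _ _
      _ ≤ ‖e m‖ * M := mul_le_mul_of_nonneg_left (hMx k) (norm_nonneg _)
  obtain ⟨y, -, σ, hσmono, hσtend⟩ :=
    (isCompact_univ_pi fun m => isCompact_Icc).tendsto_subseq
      (x := fun k => (fun m => ⟪e m, x k⟫)) hmemK
  have hpt : ∀ m, Tendsto (fun k => ⟪e m, x (σ k)⟫) atTop (nhds (y m)) := by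
    intro m
    exact tendsto_pi_nhds.mp hσtend m
  -- all pairings converge along the subsequence
  have hCauchy : ∀ v : Lp E 2 μ, ∃ l : ℝ,
      Tendsto (fun k => ⟪v, x (σ k)⟫) atTop (nhds l) := by
    intro v
    refine cauchySeq_tendsto_of_complete ?_
    rw [Metric.cauchySeq_iff]
    intro ε hε
    have hδ : 0 < ε / (4 * (M + 1)) := by positivity
    obtain ⟨w, ⟨m, rfl⟩, hm⟩ := Metric.mem_closure_iff.mp (hed v) _ hδ
    obtain ⟨N, hN⟩ := Metric.cauchySeq_iff.mp (hpt m).cauchySeq (ε/2) (by positivity)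
    refine ⟨N, fun a ha b hb => ?_⟩
    have key : ∀ c, |⟪v - e m, x (σ c)⟫| ≤ ε / 4 := by
      intro c
      calc |⟪v - e m, x (σ c)⟫| ≤ ‖v - e m‖ * ‖x (σ c)‖ := abs_real_inner_le_norm _ _
        _ ≤ (ε / (4 * (M + 1))) * (M + 1) := by
            refine mul_le_mul ?_ ((hMx _).trans (by linarith)) (norm_nonneg _) hδ.le
            rw [← dist_eq_norm]
            exact hm.le
        _ = ε / 4 := by field_simp
    have hdec : ∀ c, ⟪v, x (σ c)⟫ = ⟪v - e m, x (σ c)⟫ + ⟪e m, x (σ c)⟫ := by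
      intro c
      rw [← inner_add_left]
      norm_num
    have hab := hN a ha b hb
    rw [Real.dist_eq] at hab
    rw [Real.dist_eq, hdec a, hdec b, abs_lt]
    have h1 := abs_le.mp (key a)
    have h2 := abs_le.mp (key b)
    have h3 := abs_lt.mp hab
    constructor <;> linarith [h1.1, h1.2, h2.1, h2.2, h3.1, h3.2]
  choose L hL using hCauchy
  -- the limit functional and its Riesz representative
  have hLadd : ∀ v w, L (v + w) = L v + L w := by
    intro v w
    refine tendsto_nhds_unique (hL (v + w)) ?_
    have : (fun k => ⟪v + w, x (σ k)⟫)
        = fun k => ⟪v, x (σ k)⟫ + ⟪w, x (σ k)⟫ := by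
      funext k; rw [inner_add_left]
    rw [this]
    exact (hL v).add (hL w)
  have hLsmul : ∀ (c : ℝ) v, L (c • v) = c * L v := by
    intro c v
    refine tendsto_nhds_unique (hL (c • v)) ?_
    have : (fun k => ⟪c • v, x (σ k)⟫) = fun k => c * ⟪v, x (σ k)⟫ := by
      funext k; rw [real_inner_smul_left]
    rw [this]
    exact (hL v).const_mul c
  have hLbound : ∀ v, ‖L v‖ ≤ M * ‖v‖ := by
    intro v
    refine le_of_tendsto (hL v).norm (Eventually.of_forall fun k => ?_)
    calc ‖⟪v, x (σ k)⟫‖ = |⟪v, x (σ k)⟫| := Real.norm_eq_abs _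
      _ ≤ ‖v‖ * ‖x (σ k)‖ := abs_real_inner_le_norm _ _
      _ ≤ ‖v‖ * M := mul_le_mul_of_nonneg_left (hMx _) (norm_nonneg _)
      _ = M * ‖v‖ := mul_comm _ _
  set Lmap : Lp E 2 μ →ₗ[ℝ] ℝ :=
    { toFun := L, map_add' := hLadd, map_smul' := hLsmul } with hLmap
  set Lcont : Lp E 2 μ →L[ℝ] ℝ := Lmap.mkContinuous M hLbound with hLcont
  set x0 : Lp E 2 μ := (InnerProductSpace.toDual ℝ (Lp E 2 μ)).symm Lcont with hx0def
  have hx0 : ∀ v, Tendsto (fun k => ⟪v, x (σ k)⟫) atTop (nhds ⟪v, x0⟫) := by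
    intro v
    have h1 : ⟪v, x0⟫ = L v := by
      rw [real_inner_comm, hx0def, InnerProductSpace.toDual_symm_apply]
      rfl
    rw [h1]
    exact hL v
  -- the limit function
  set φ0 : ℝ → Fin n → ℝ := fun s => eqv ((x0 : ℝ → EuclideanSpace ℝ (Fin n)) s) with hφ0
  have hmeas0 : AEStronglyMeasurable φ0 μ :=
    eqv.continuous.comp_aestronglyMeasurable (Lp.aestronglyMeasurable x0)
  have heq0 : ∀ s j, φ0 s j = (x0 : ℝ → EuclideanSpace ℝ (Fin n)) s j := by
    intro s j
    simp [hφ0, heqv]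
  have hcoeφ : ∀ k j, (fun s => ((x k : ℝ → EuclideanSpace ℝ (Fin n)) s) j)
      =ᵐ[μ] fun s => φ k s j := by
    intro k j
    filter_upwards [(hmem k).coeFn_toLp] with s hs
    rw [hs]
    simp [hφE, heqv]
  -- coordinates of Lp elements are integrable
  have hcoordInt : ∀ (z : Lp (EuclideanSpace ℝ (Fin n)) 2 μ) (j : Fin n),
      Integrable (fun s => (z : ℝ → EuclideanSpace ℝ (Fin n)) s j) μ := by
    intro z j
    have h1 : Integrable (fun s => (z : ℝ → EuclideanSpace ℝ (Fin n)) s) μ :=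
      memLp_one_iff_integrable.mp ((Lp.memLp z).mono_exponent one_le_two)
    have h2 := (ContinuousLinearMap.comp (ContinuousLinearMap.proj j)
      eqv.toContinuousLinearMap).integrable_comp h1
    refine h2.congr (Eventually.of_forall fun s => ?_)
    simp [heqv]
  -- inner products with indicators compute set integrals of coordinates
  have hind : ∀ (A : Set ℝ) (hA : MeasurableSet A) (j : Fin n)
      (z : Lp (EuclideanSpace ℝ (Fin n)) 2 μ),
      (⟪(indicatorConstLp 2 hA (measure_ne_top μ A)
          (EuclideanSpace.single j (1:ℝ))), z⟫ : ℝ)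
        = ∫ s in A, (z : ℝ → EuclideanSpace ℝ (Fin n)) s j ∂μ := by
    intro A hA j z
    rw [MeasureTheory.L2.inner_indicatorConstLp_eq_setIntegral_inner]
    simp [EuclideanSpace.inner_single_left]
  have hbound_int : ∀ (A : Set ℝ) (j : Fin n) (k : ℕ),
      |∫ s in A, ((x k : ℝ → EuclideanSpace ℝ (Fin n)) s) j ∂μ| ≤ R * (μ A).toReal := by
    intro A j k
    have h1 : (∫ s in A, ((x k : ℝ → EuclideanSpace ℝ (Fin n)) s) j ∂μ)
        = ∫ s in A, φ k s j ∂μ :=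
      integral_congr_ae (ae_restrict_of_ae (hcoeφ k j))
    rw [h1]
    have hint : Integrable (fun s => φ k s j) (μ.restrict A) :=
      ((hcoordInt (x k) j).congr (hcoeφ k j)).restrict
    have hb : ∀ᵐ s ∂μ.restrict A, |φ k s j| ≤ R :=
      ae_restrict_of_ae ((hae k).mono fun s hs => hs j)
    rw [abs_le]
    constructor
    · have h2 := integral_mono_ae (integrable_const (-R)) hint
        (hb.mono fun s hs => (abs_le.mp hs).1)
      simp only [integral_const] at h2
      have hμA : ((μ.restrict A) Set.univ).toReal = (μ A).toReal := by
        rw [Measure.restrict_apply_univ]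
      rw [measureReal_def, hμA] at h2
      calc -(R * (μ A).toReal) = (μ A).toReal • (-R) := by
            rw [smul_eq_mul]; ring
        _ ≤ ∫ s in A, φ k s j ∂μ := h2
    · have h2 := integral_mono_ae hint (integrable_const R)
        (hb.mono fun s hs => (abs_le.mp hs).2)
      simp only [integral_const] at h2
      rw [measureReal_def, Measure.restrict_apply_univ] at h2
      calc (∫ s in A, φ k s j ∂μ) ≤ (μ A).toReal • R := h2
        _ = R * (μ A).toReal := by rw [smul_eq_mul]; ring
  -- the a.e. bound for φ0
  have hx0coordInt : ∀ j, Integrable (fun s => φ0 s j) μ := by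
    intro j
    refine (hcoordInt x0 j).congr (Eventually.of_forall fun s => ?_)
    dsimp only
    exact (heq0 s j).symm
  have hsetint0 : ∀ (A : Set ℝ) (hA : MeasurableSet A) (j : Fin n),
      |∫ s in A, φ0 s j ∂μ| ≤ R * (μ A).toReal := by
    intro A hA j
    have h3 : (∫ s in A, φ0 s j ∂μ)
        = (⟪(indicatorConstLp 2 hA (measure_ne_top μ A)
            (EuclideanSpace.single j (1:ℝ))), x0⟫ : ℝ) := by
      rw [hind A hA j x0]
      exact integral_congr_ae (Eventually.of_forall fun s => (heq0 s j))
    rw [h3, abs_le]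
    constructor
    · refine ge_of_tendsto (hx0 _) (Eventually.of_forall fun k => ?_)
      rw [hind A hA j (x (σ k))]
      exact (abs_le.mp (hbound_int A j (σ k))).1
    · refine le_of_tendsto (hx0 _) (Eventually.of_forall fun k => ?_)
      rw [hind A hA j (x (σ k))]
      exact (abs_le.mp (hbound_int A j (σ k))).2
  have hae0 : ∀ᵐ s ∂μ, ∀ j, |φ0 s j| ≤ R := by
    rw [ae_all_iff]
    intro j
    have hub : 0 ≤ᵐ[μ] fun s => R - φ0 s j := by
      refine ae_nonneg_of_forall_setIntegral_nonneg
        ((integrable_const R).sub (hx0coordInt j)) ?_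
      intro A hA _
      rw [integral_sub (integrable_const R).restrict (hx0coordInt j).restrict]
      have h2 := (abs_le.mp (hsetint0 A hA j)).2
      rw [integral_const, measureReal_def, Measure.restrict_apply_univ, smul_eq_mul]
      linarith
    have hlb : 0 ≤ᵐ[μ] fun s => φ0 s j + R := by
      refine ae_nonneg_of_forall_setIntegral_nonneg
        ((hx0coordInt j).add (integrable_const R)) ?_
      intro A hA _
      rw [integral_add (hx0coordInt j).restrict (integrable_const R).restrict]
      have h2 := (abs_le.mp (hsetint0 A hA j)).1
      rw [integral_const, measureReal_def, Measure.restrict_apply_univ, smul_eq_mul]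
      linarith
    filter_upwards [hub, hlb] with s h1 h2
    simp only [Pi.zero_apply] at h1 h2
    rw [abs_le]
    constructor <;> linarith
  have hsnorm0 : eLpNorm φ0 ⊤ μ ≤ ENNReal.ofReal R := by
    rw [eLpNorm_exponent_top]
    refine eLpNormEssSup_le_of_ae_bound (C := R) ?_
    filter_upwards [hae0] with s hs
    rw [pi_norm_le_iff_of_nonneg hR]
    intro j
    rw [Real.norm_eq_abs]
    exact hs j
  -- pairing convergence against bounded measurable scalar functions
  have hWconv : ∀ (h : ℝ → ℝ), AEStronglyMeasurable h μ → ∀ (c : ℝ),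
      (∀ᵐ s ∂μ, |h s| ≤ c) → ∀ (j : Fin n),
      Tendsto (fun k => ∫ s, h s * φ (σ k) s j ∂μ) atTop
        (nhds (∫ s, h s * φ0 s j ∂μ)) := by
    intro h hm c hb j
    have hmw : AEStronglyMeasurable
        (fun s => h s • (EuclideanSpace.single j (1:ℝ) : EuclideanSpace ℝ (Fin n))) μ :=
      hm.smul aestronglyMeasurable_const
    have hbw : ∀ᵐ s ∂μ, ‖h s • (EuclideanSpace.single j (1:ℝ) : EuclideanSpace ℝ (Fin n))‖
        ≤ |c| * ‖(EuclideanSpace.single j (1:ℝ) : EuclideanSpace ℝ (Fin n))‖ := by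
      filter_upwards [hb] with s hs
      rw [norm_smul, Real.norm_eq_abs]
      exact mul_le_mul_of_nonneg_right (hs.trans (le_abs_self c)) (norm_nonneg _)
    have hmemW := (memLp_top_of_bound hmw _ hbw).mono_exponent
      (le_top : (2:ℝ≥0∞) ≤ ⊤)
    set W := hmemW.toLp _ with hW
    have hWinner : ∀ z : Lp (EuclideanSpace ℝ (Fin n)) 2 μ,
        (⟪W, z⟫ : ℝ) = ∫ s, h s * ((z : ℝ → EuclideanSpace ℝ (Fin n)) s) j ∂μ := by
      intro z
      rw [MeasureTheory.L2.inner_def]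
      refine integral_congr_ae ?_
      filter_upwards [hmemW.coeFn_toLp] with s hs
      rw [hs, real_inner_smul_left]
      congr 1
      simpa using (EuclideanSpace.inner_single_left (𝕜 := ℝ) j 1 (z s))
    have h1 := hx0 W
    rw [hWinner x0] at h1
    have h2 : (∫ s, h s * ((x0 : ℝ → EuclideanSpace ℝ (Fin n)) s) j ∂μ)
        = ∫ s, h s * φ0 s j ∂μ :=
      integral_congr_ae (Eventually.of_forall fun s => by dsimp only; rw [heq0])
    rw [h2] at h1
    refine h1.congr fun k => ?_
    rw [hWinner (x (σ k))]
    refine integral_congr_ae ?_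
    filter_upwards [hcoeφ (σ k) j] with s hs
    rw [hs]
  -- products with coordinates are integrable
  have hprodInt : ∀ (h : ℝ → ℝ), Integrable h μ → ∀ (ψ : ℝ → Fin n → ℝ),
      AEStronglyMeasurable ψ μ → (∀ᵐ s ∂μ, ∀ j', |ψ s j'| ≤ R) → ∀ j,
      Integrable (fun s => h s * ψ s j) μ := by
    intro h hint ψ hψm hψb j
    have hmj : AEStronglyMeasurable (fun s => ψ s j) μ :=
      (continuous_apply j).comp_aestronglyMeasurable hψm
    have hb : ∀ᵐ s ∂μ, ‖ψ s j‖ ≤ R := hψb.mono fun s hs => by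
      rw [Real.norm_eq_abs]; exact hs j
    exact (hint.bdd_mul hmj hb).congr (Eventually.of_forall fun s => mul_comm _ _)
  have hgjInt : ∀ (g : ℝ → Fin n → ℝ), Integrable g μ → ∀ j,
      Integrable (fun s => g s j) μ := by
    intro g hg j
    exact hg.mono ((continuous_apply j).comp_aestronglyMeasurable hg.1)
      (Eventually.of_forall fun s => norm_le_pi_norm (g s) j)
  -- coordinatewise convergence for integrable test functions
  have hjconv : ∀ (g : ℝ → Fin n → ℝ), Integrable g μ → ∀ j,
      Tendsto (fun k => ∫ s, g s j * φ (σ k) s j ∂μ) atTop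
        (nhds (∫ s, g s j * φ0 s j ∂μ)) := by
    intro g hg j
    have hgjint : Integrable (fun s => g s j) μ := hgjInt g hg j
    set tr : ℕ → ℝ → ℝ := fun m s => max (min (g s j) m) (-(m:ℝ)) with htrdef
    have htrmeas : ∀ m : ℕ, AEStronglyMeasurable (tr m) μ := fun m =>
      ((continuous_id.min continuous_const).max continuous_const).comp_aestronglyMeasurable
        hgjint.1
    have htrbd : ∀ m : ℕ, ∀ᵐ s ∂μ, |tr m s| ≤ (m:ℝ) := by
      intro m
      refine Eventually.of_forall fun s => abs_le.mpr ⟨le_max_right _ _, ?_⟩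
      exact max_le (min_le_right _ _) (neg_le_self (Nat.cast_nonneg m))
    have htrabs : ∀ (m : ℕ) s, |tr m s| ≤ |g s j| := fun m s =>
      clamp_abs_le (m : ℝ) (Nat.cast_nonneg m) (g s j)
    have htrint : ∀ m : ℕ, Integrable (tr m) μ := fun m =>
      hgjint.mono (htrmeas m) (Eventually.of_forall fun s => by
        rw [Real.norm_eq_abs, Real.norm_eq_abs]; exact htrabs m s)
    have herr : Tendsto (fun m => ∫ s, |g s j - tr m s| ∂μ) atTop (nhds 0) := by
      have h0 := tendsto_integral_of_dominated_convergence
        (F := fun m s => |g s j - tr m s|) (f := fun _ => (0:ℝ))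
        (bound := fun s => 2 * |g s j|)
        (fun m => ((hgjint.1.sub (htrmeas m)).norm).congr
          (Eventually.of_forall fun s => (Real.norm_eq_abs _)))
        (hgjint.abs.const_mul 2)
        (fun m => Eventually.of_forall fun s => by
          rw [Real.norm_eq_abs, abs_abs]
          calc |g s j - tr m s| ≤ |g s j| + |tr m s| := abs_sub _ _
            _ ≤ |g s j| + |g s j| := by linarith [htrabs m s]
            _ = 2 * |g s j| := by ring)
        (Eventually.of_forall fun s => by
          have h9 : Tendsto (fun m : ℕ => g s j - tr m s) atTop (nhds (g s j - g s j)) :=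
            tendsto_const_nhds.sub (clamp_eventually_eq (g s j))
          rw [sub_self] at h9
          simpa using h9.abs)
      simpa using h0
    have herrbd : ∀ (m : ℕ) (ψ : ℝ → Fin n → ℝ), AEStronglyMeasurable ψ μ →
        (∀ᵐ s ∂μ, ∀ j', |ψ s j'| ≤ R) →
        |(∫ s, g s j * ψ s j ∂μ) - ∫ s, tr m s * ψ s j ∂μ|
          ≤ R * ∫ s, |g s j - tr m s| ∂μ := by
      intro m ψ hψm hψb
      have hsub : (∫ s, g s j * ψ s j ∂μ) - (∫ s, tr m s * ψ s j ∂μ)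
          = ∫ s, (g s j - tr m s) * ψ s j ∂μ := by
        rw [← integral_sub (hprodInt (fun s => g s j) hgjint ψ hψm hψb j)
          (hprodInt (tr m) (htrint m) ψ hψm hψb j)]
        exact integral_congr_ae (Eventually.of_forall fun s => by dsimp only; ring)
      rw [hsub]
      calc |∫ s, (g s j - tr m s) * ψ s j ∂μ|
          ≤ ∫ s, |g s j - tr m s| * |ψ s j| ∂μ := by
            simpa [Real.norm_eq_abs, abs_mul] using
              norm_integral_le_integral_norm (fun s => (g s j - tr m s) * ψ s j)
        _ ≤ ∫ s, |g s j - tr m s| * R ∂μ := by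
            refine integral_mono_ae ?_ (((hgjint.sub (htrint m)).abs).mul_const R) ?_
            · have h5 := (hprodInt (fun s => g s j) hgjint ψ hψm hψb j).sub
                (hprodInt (tr m) (htrint m) ψ hψm hψb j)
              have h6 : Integrable (fun s => (g s j - tr m s) * ψ s j) μ :=
                h5.congr (Eventually.of_forall fun s => by simp only [Pi.sub_apply]; ring)
              exact h6.abs.congr (Eventually.of_forall fun s => by dsimp only; rw [abs_mul])
            · filter_upwards [hψb] with s hs
              exact mul_le_mul_of_nonneg_left (hs j) (abs_nonneg _)
        _ = R * ∫ s, |g s j - tr m s| ∂μ := by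
            rw [integral_mul_const]; ring
    rw [Metric.tendsto_atTop]
    intro ε hε
    have herr0 : ∀ m : ℕ, 0 ≤ ∫ s, |g s j - tr m s| ∂μ := fun m =>
      integral_nonneg fun s => abs_nonneg _
    obtain ⟨m, hm⟩ := (herr.eventually (gt_mem_nhds
      (show (0:ℝ) < ε / (4 * (R + 1)) by positivity))).exists
    have hWc := hWconv (tr m) (htrmeas m) (m : ℝ) (htrbd m) j
    obtain ⟨N, hN⟩ := Metric.tendsto_atTop.mp hWc (ε/2) (by positivity)
    refine ⟨N, fun k hk => ?_⟩
    have e1 := herrbd m (φ (σ k)) (hmeas _) (hae _)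
    have e2 := herrbd m φ0 hmeas0 hae0
    have e3 := hN k hk
    rw [Real.dist_eq] at e3 ⊢
    have hRe : R * (∫ s, |g s j - tr m s| ∂μ) < ε/4 := by
      calc R * (∫ s, |g s j - tr m s| ∂μ)
          ≤ (R+1) * (∫ s, |g s j - tr m s| ∂μ) := by nlinarith [herr0 m]
        _ < (R+1) * (ε / (4*(R+1))) := mul_lt_mul_of_pos_left hm (by linarith)
        _ = ε/4 := by field_simp
    have t1 : |(∫ s, g s j * φ (σ k) s j ∂μ) - ∫ s, g s j * φ0 s j ∂μ|
        ≤ |(∫ s, g s j * φ (σ k) s j ∂μ) - ∫ s, tr m s * φ (σ k) s j ∂μ|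
          + |(∫ s, tr m s * φ (σ k) s j ∂μ) - ∫ s, tr m s * φ0 s j ∂μ|
          + |(∫ s, tr m s * φ0 s j ∂μ) - ∫ s, g s j * φ0 s j ∂μ| := by
      have u1 := abs_sub_le (∫ s, g s j * φ (σ k) s j ∂μ)
        (∫ s, tr m s * φ (σ k) s j ∂μ) (∫ s, g s j * φ0 s j ∂μ)
      have u2 := abs_sub_le (∫ s, tr m s * φ (σ k) s j ∂μ)
        (∫ s, tr m s * φ0 s j ∂μ) (∫ s, g s j * φ0 s j ∂μ)
      linarith
    have e2' : |(∫ s, tr m s * φ0 s j ∂μ) - ∫ s, g s j * φ0 s j ∂μ|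
        ≤ R * ∫ s, |g s j - tr m s| ∂μ := by
      rw [abs_sub_comm]; exact e2
    linarith [t1, e1, e2', e3, hRe]
  -- assemble over coordinates
  refine ⟨σ, φ0, hσmono, hmeas0, hsnorm0, ?_⟩
  intro g hg
  have hsum : ∀ (ψ : ℝ → Fin n → ℝ), AEStronglyMeasurable ψ μ →
      (∀ᵐ s ∂μ, ∀ j', |ψ s j'| ≤ R) →
      (∫ s, ∑ j, g s j * ψ s j ∂μ) = ∑ j, ∫ s, g s j * ψ s j ∂μ := by
    intro ψ hψm hψb
    exact integral_finset_sum _ (fun j _ => hprodInt (fun s => g s j) (hgjInt g hg j) ψ hψm hψb j)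
  rw [hsum φ0 hmeas0 hae0]
  exact (tendsto_finset_sum (Finset.univ : Finset (Fin n))
    (fun j _ => hjconv g hg j)).congr fun k => (hsum (φ (σ k)) (hmeas _) (hae _)).symm

end Compact

/-- Forward completeness beyond time `T` plus weak-* continuity of the solution map
implies bounded reachability sets on `[t0,T]`: if whenever `ξᵏ → ξ⁰` and `φᵏ ⇀ φ⁰`
(weak-* in `L^∞([−θ,0],ℝⁿ)`) with the limit solution defined and bounded on `[t0,T′]`
for some `T′ > T` the solutions converge uniformly on `[t0,T′]`, and if moreover every
solution starting in the ball of radius `R` is defined beyond time `T`, then the set of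
vectors reachable from that ball over `[t0,T]` is bounded. -/
theorem stmt_19 (n : ℕ) (θ t0 T R : ℝ) (hθ : 0 < θ) (ht0 : 0 ≤ t0) (hT : t0 < T)
    (hR : 0 < R)
    (sol : (Fin n → ℝ) → (ℝ → (Fin n → ℝ)) → ℝ → (Fin n → ℝ))
    (Tmax : (Fin n → ℝ) → (ℝ → (Fin n → ℝ)) → ℝ≥0∞)
    -- solutions are continuous on compact subintervals of their maximal interval
    (hsolcont : ∀ (ξ : Fin n → ℝ) (φ : ℝ → (Fin n → ℝ)) (T' : ℝ),
      ENNReal.ofReal T' < Tmax ξ φ → ContinuousOn (sol ξ φ) (Set.Icc t0 T'))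
    -- weak-* continuity of the solution map
    (hcont : ∀ (ξ : ℕ → (Fin n → ℝ)) (ξ0 : Fin n → ℝ)
      (φ : ℕ → ℝ → (Fin n → ℝ)) (φ0 : ℝ → (Fin n → ℝ)) (T' : ℝ), T < T' →
      (∀ k, AEStronglyMeasurable (φ k) (volume.restrict (Set.Icc (-θ) 0))) →
      AEStronglyMeasurable φ0 (volume.restrict (Set.Icc (-θ) 0)) →
      Tendsto ξ atTop (nhds ξ0) →
      (∀ g : ℝ → (Fin n → ℝ), Integrable g (volume.restrict (Set.Icc (-θ) 0)) →
        Tendsto (fun k => ∫ s in Set.Icc (-θ) 0, ∑ j, g s j * φ k s j) atTop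
          (nhds (∫ s in Set.Icc (-θ) 0, ∑ j, g s j * φ0 s j))) →
      ENNReal.ofReal T' < Tmax ξ0 φ0 →
      (∃ C : ℝ, ∀ t ∈ Set.Icc t0 T', ‖sol ξ0 φ0 t‖ ≤ C) →
      TendstoUniformlyOn (fun k t => sol (ξ k) (φ k) t) (sol ξ0 φ0) atTop
        (Set.Icc t0 T'))
    -- every solution from the ball of radius R is defined beyond time T
    (hdef : ∀ (ξ : Fin n → ℝ) (φ : ℝ → (Fin n → ℝ)), ‖ξ‖ ≤ R →
      AEStronglyMeasurable φ (volume.restrict (Set.Icc (-θ) 0)) →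
      eLpNorm φ ⊤ (volume.restrict (Set.Icc (-θ) 0)) ≤ ENNReal.ofReal R →
      ENNReal.ofReal T < Tmax ξ φ) :
    ∃ C : ℝ, ∀ t ∈ Set.Icc t0 T, ∀ (ξ : Fin n → ℝ) (φ : ℝ → (Fin n → ℝ)),
      ‖ξ‖ ≤ R →
      AEStronglyMeasurable φ (volume.restrict (Set.Icc (-θ) 0)) →
      eLpNorm φ ⊤ (volume.restrict (Set.Icc (-θ) 0)) ≤ ENNReal.ofReal R →
      ‖sol ξ φ t‖ ≤ C := by
    classical
  haveI : IsFiniteMeasure (volume.restrict (Set.Icc (-θ) 0)) :=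
    ⟨by rw [Measure.restrict_apply_univ]; exact measure_Icc_lt_top⟩
  by_contra hCC
  push_neg at hCC
  have hC' : ∀ k : ℕ, ∃ t ∈ Set.Icc t0 T, ∃ ξ φ, ‖ξ‖ ≤ R ∧
      AEStronglyMeasurable φ (volume.restrict (Set.Icc (-θ) 0)) ∧
      eLpNorm φ ⊤ (volume.restrict (Set.Icc (-θ) 0)) ≤ ENNReal.ofReal R ∧
      (k:ℝ) < ‖sol ξ φ t‖ := fun k => hCC k
  choose t ht ξ ψ hξ hψm hψb hgt using hC'
  -- extract a convergent subsequence of initial values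
  have hξball : ∀ k, ξ k ∈ Metric.closedBall (0 : Fin n → ℝ) R := fun k => by
    rw [Metric.mem_closedBall, dist_zero_right]; exact hξ k
  obtain ⟨ξ0, hξ0mem, σ1, hσ1mono, hσ1tend⟩ :=
    (isCompact_closedBall (0 : Fin n → ℝ) R).tendsto_subseq hξball
  -- extract a weak-* convergent subsequence of the histories
  obtain ⟨σ2, φ0, hσ2mono, hmeas0, hbd0, hpair⟩ :=
    seq_weak_compact n (volume.restrict (Set.Icc (-θ) 0)) R hR.le
      (fun k => ψ (σ1 k)) (fun k => hψm _) (fun k => hψb _)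
  set σ : ℕ → ℕ := fun k => σ1 (σ2 k) with hσdef
  have hσmono : StrictMono σ := hσ1mono.comp hσ2mono
  have hξ0R : ‖ξ0‖ ≤ R := by
    rwa [Metric.mem_closedBall, dist_zero_right] at hξ0mem
  have hTmax : ENNReal.ofReal T < Tmax ξ0 φ0 := hdef ξ0 φ0 hξ0R hmeas0 hbd0
  have hT0 : 0 < T := lt_of_le_of_lt ht0 hT
  obtain ⟨T', hTT', hT'max⟩ : ∃ T', T < T' ∧ ENNReal.ofReal T' < Tmax ξ0 φ0 := by
    rcases eq_or_ne (Tmax ξ0 φ0) ⊤ with h | h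
    · exact ⟨T + 1, by linarith, by rw [h]; exact ENNReal.ofReal_lt_top⟩
    · have hTlt : T < (Tmax ξ0 φ0).toReal := by
        have h1 := hTmax
        rw [← ENNReal.ofReal_toReal h] at h1
        exact (ENNReal.ofReal_lt_ofReal_iff_of_nonneg hT0.le).mp h1
      refine ⟨(T + (Tmax ξ0 φ0).toReal) / 2, by linarith, ?_⟩
      have h2 : (T + (Tmax ξ0 φ0).toReal)/2 < (Tmax ξ0 φ0).toReal := by linarith
      calc ENNReal.ofReal ((T + (Tmax ξ0 φ0).toReal) / 2)
          < ENNReal.ofReal ((Tmax ξ0 φ0).toReal) :=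
            (ENNReal.ofReal_lt_ofReal_iff (by linarith)).mpr h2
        _ = Tmax ξ0 φ0 := ENNReal.ofReal_toReal h
  obtain ⟨C0, hC0⟩ : ∃ C0 : ℝ, ∀ t' ∈ Set.Icc t0 T', ‖sol ξ0 φ0 t'‖ ≤ C0 :=
    isCompact_Icc.exists_bound_of_continuousOn (hsolcont ξ0 φ0 T' hT'max)
  have huc := hcont (fun k => ξ (σ k)) ξ0 (fun k => ψ (σ k)) φ0 T' hTT'
    (fun k => hψm _) hmeas0
    (hσ1tend.comp hσ2mono.tendsto_atTop)
    hpair hT'max ⟨C0, hC0⟩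
  obtain ⟨N, hN⟩ := eventually_atTop.mp
    ((Metric.tendstoUniformlyOn_iff.mp huc) 1 one_pos)
  set k0 : ℕ := max N ⌈C0 + 1⌉₊ with hk0def
  have hmemt : t (σ k0) ∈ Set.Icc t0 T' :=
    ⟨(ht (σ k0)).1, le_trans (ht (σ k0)).2 hTT'.le⟩
  have h2 := hN k0 (le_max_left _ _) (t (σ k0)) hmemt
  have h4 := hC0 _ hmemt
  have h5 : ‖sol (ξ (σ k0)) (ψ (σ k0)) (t (σ k0))‖ - ‖sol ξ0 φ0 (t (σ k0))‖
      ≤ dist (sol ξ0 φ0 (t (σ k0))) (sol (ξ (σ k0)) (ψ (σ k0)) (t (σ k0))) := by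
    rw [dist_comm, dist_eq_norm]
    exact norm_sub_norm_le _ _
  have h6 : ((σ k0 : ℕ) : ℝ) < ‖sol (ξ (σ k0)) (ψ (σ k0)) (t (σ k0))‖ := hgt (σ k0)
  have h7 : (k0:ℝ) ≤ ((σ k0 : ℕ) : ℝ) := Nat.cast_le.mpr hσmono.le_apply
  have h8 : (C0 + 1 : ℝ) ≤ (k0:ℝ) := by
    calc C0 + 1 ≤ (⌈C0+1⌉₊ : ℝ) := Nat.le_ceil _
      _ ≤ (k0 : ℝ) := Nat.cast_le.mpr (le_max_right _ _)
  linarith
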